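/- Let n ≥ 3 be an integer, let δ > 0, and let q be a real number with q > n/(n−2). Then there exist constants c, C > 0 and ε₀ > 0 such that for all ε ∈ (0, ε₀): c · ε^{(2n−(n−2)q)/2} ≤ ∫_{B(0,δ)} u_ε(x)^q dx ≤ C · ε^{(2n−(n−2)q)/2}. -/

import Mathlib

open MeasureTheory Set Metric


lemma H_cont (n : ℕ) (p : ℝ) : Continuous fun s : ℝ => s ^ (n-1) * (1 + s^2) ^ (-p) := by
  apply Continuous.mul (by fun_prop)
  apply Continuous.rpow_const (by fun_prop)
  intro x; left; positivity

lemma H_int (n : ℕ) (p : ℝ) (hn : 1 ≤ n) (hp : (n:ℝ) < 2*p) :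
    IntegrableOn (fun s : ℝ => s ^ (n-1) * (1 + s^2) ^ (-p)) (Ioi 0) := by
  have hp0 : 0 < p := by
    have : (0:ℝ) ≤ n := Nat.cast_nonneg n
    linarith
  rw [← Ioc_union_Ioi_eq_Ioi (zero_le_one (α := ℝ))]
  apply IntegrableOn.union
  · exact (H_cont n p).continuousOn.integrableOn_compact isCompact_Icc |>.mono_set Ioc_subset_Icc_self
  · apply Integrable.mono' (integrableOn_Ioi_rpow_of_lt (a := (n:ℝ)-1-2*p) (by linarith) one_pos)
      ((H_cont n p).aestronglyMeasurable.restrict)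
    filter_upwards [ae_restrict_mem measurableSet_Ioi] with s hs
    have hs1 : (1:ℝ) ≤ s := le_of_lt hs
    have hs0 : (0:ℝ) < s := lt_of_lt_of_le one_pos hs1
    have h1 : (1 + s^2) ^ (-p) ≤ (s^2) ^ (-p) :=
      Real.rpow_le_rpow_of_nonpos (by positivity) (by nlinarith) (by linarith)
    have h2 : ((s^2 : ℝ)) ^ (-p) = s ^ (-(2*p)) := by
      rw [← Real.rpow_natCast s 2, ← Real.rpow_mul hs0.le]; norm_num
    have h3 : (s:ℝ) ^ (n-1) = s ^ ((n:ℝ)-1) := by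
      rw [← Real.rpow_natCast s (n-1)]; congr 1
      push_cast [Nat.cast_sub hn]; ring
    rw [Real.norm_eq_abs, abs_of_nonneg (by positivity)]
    calc s ^ (n-1) * (1 + s^2) ^ (-p) ≤ s ^ (n-1) * (s^2) ^ (-p) := by
          apply mul_le_mul_of_nonneg_left h1 (by positivity)
      _ = s ^ ((n:ℝ)-1-2*p) := by
          rw [h2, h3, ← Real.rpow_add hs0]; ring_nf

lemma K_pos (n : ℕ) (p T : ℝ) (hT : 0 < T) :
    0 < ∫ s in Ioo (0:ℝ) T, s ^ (n-1) * (1 + s^2) ^ (-p) := by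
  rw [← integral_Ioc_eq_integral_Ioo, ← intervalIntegral.integral_of_le hT.le]
  apply intervalIntegral.intervalIntegral_pos_of_pos_on
    ((H_cont n p).intervalIntegrable 0 T)
    (fun x hx => by have := hx.1; positivity) hT

lemma key_pt (n : ℕ) (hn : 1 ≤ n) (p ε δ : ℝ) (hε : 0 < ε) {r : ℝ} (hr : r ∈ Ioi (0:ℝ)) :
    r ^ (n-1) * Set.indicator (Iio δ) (fun t => (ε/(ε^2+t^2))^p) r
      = ε ^ ((n:ℝ)-1-p) *
        Set.indicator (Iio (δ/ε)) (fun s => s ^ (n-1) * (1 + s^2) ^ (-p)) (ε⁻¹ * r) := by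
  have hr0 : 0 < r := hr
  have hmem : ε⁻¹ * r < δ/ε ↔ r < δ := by
    rw [div_eq_inv_mul]; exact mul_lt_mul_iff_right₀ (inv_pos.2 hε)
  by_cases h : r < δ
  · rw [Set.indicator_of_mem (mem_Iio.2 h), Set.indicator_of_mem (mem_Iio.2 (hmem.2 h))]
    have e1 : (ε/(ε^2+r^2))^p = ε^(-p) * ((1+(ε⁻¹*r)^2)^(-p)) := by
      rw [show ε/(ε^2+r^2) = (ε * (1+(ε⁻¹*r)^2))⁻¹ by field_simp,
        Real.inv_rpow (by positivity), Real.mul_rpow hε.le (by positivity),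
        Real.rpow_neg hε.le, Real.rpow_neg (by positivity), mul_inv]
    have e2 : (ε⁻¹*r) ^ (n-1) = (ε^(n-1) : ℝ)⁻¹ * r^(n-1) := by
      rw [mul_pow, inv_pow]
    have e3 : ε ^ ((n:ℝ)-1-p) = ε^(n-1 : ℕ) * ε^(-p) := by
      rw [← Real.rpow_natCast ε (n-1), ← Real.rpow_add hε]
      congr 1; push_cast [Nat.cast_sub hn]; ring
    have hne : (ε:ℝ)^(n-1) ≠ 0 := by positivity
    rw [e1, e2, e3]
    field_simp
  · rw [Set.indicator_of_notMem (fun hc => h (mem_Iio.1 hc)), Set.indicator_of_notMem (fun hc => h (hmem.1 (mem_Iio.1 hc)))]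
    simp

lemma radial (n : ℕ) (hn : 3 ≤ n) (p δ ε : ℝ) (hε : 0 < ε) :
    (∫ x in Metric.ball (0 : EuclideanSpace ℝ (Fin n)) δ, (ε/(ε^2+‖x‖^2))^p)
      = ((n : ℝ) * (volume (Metric.ball (0:EuclideanSpace ℝ (Fin n)) 1)).toReal) *
        (ε ^ ((n:ℝ)-p) * ∫ s in Ioo (0:ℝ) (δ/ε), s ^ (n-1) * (1 + s^2) ^ (-p)) := by
  haveI : NeZero n := ⟨by omega⟩
  have hn1 : 1 ≤ n := by omega
  rw [← integral_indicator measurableSet_ball]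
  have hrw : ∀ x : EuclideanSpace ℝ (Fin n),
      Set.indicator (Metric.ball (0 : EuclideanSpace ℝ (Fin n)) δ)
        (fun x => (ε/(ε^2+‖x‖^2))^p) x
        = Set.indicator (Iio δ) (fun t => (ε/(ε^2+t^2))^p) ‖x‖ := by
    intro x
    by_cases hx : ‖x‖ < δ <;>
      simp [Set.indicator, mem_ball_zero_iff, hx]
  simp_rw [hrw]
  rw [integral_fun_norm_addHaar volume (fun t : ℝ => Set.indicator (Iio δ) (fun t => (ε/(ε^2+t^2))^p) t)]
  simp only [finrank_euclideanSpace, Fintype.card_fin, nsmul_eq_mul, smul_eq_mul]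
  rw [mul_assoc]
  congr 1
  congr 1
  -- inner integral
  rw [setIntegral_congr_fun measurableSet_Ioi (fun r hr => key_pt n hn1 p ε δ hε hr),
    MeasureTheory.integral_const_mul,
    integral_comp_mul_left_Ioi
      (fun s => Set.indicator (Iio (δ/ε)) (fun s => s ^ (n-1) * (1 + s^2) ^ (-p)) s) 0 (inv_pos.2 hε),
    mul_zero, inv_inv, smul_eq_mul,
    integral_indicator measurableSet_Iio,
    Measure.restrict_restrict measurableSet_Iio]
  rw [show Iio (δ/ε) ∩ Ioi (0:ℝ) = Ioo 0 (δ/ε) by rw [inter_comm, Ioi_inter_Iio]]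
  have hee : ε ^ ((n:ℝ)-1-p) * ε = ε ^ ((n:ℝ)-p) := by
    calc ε ^ ((n:ℝ)-1-p) * ε = ε ^ ((n:ℝ)-1-p) * ε ^ (1:ℝ) := by rw [Real.rpow_one]
      _ = ε ^ ((n:ℝ)-1-p+1) := (Real.rpow_add hε _ _).symm
      _ = ε ^ ((n:ℝ)-p) := by ring_nf
  rw [← mul_assoc, hee]

/-- Supercritical estimate for the standard bubble `u_ε(x) = (ε/(ε²+|x|²))^{(n-2)/2}`:
for `q > n/(n-2)` one has `∫_{B(0,δ)} u_ε^q ≍ ε^{(2n-(n-2)q)/2}` for small `ε`. -/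
theorem bubble_integral_supercritical (n : ℕ) (hn : 3 ≤ n) (δ : ℝ) (hδ : 0 < δ)
    (q : ℝ) (hq : (n : ℝ) / ((n : ℝ) - 2) < q) :
    ∃ c C ε₀ : ℝ, 0 < c ∧ 0 < C ∧ 0 < ε₀ ∧
      ∀ ε : ℝ, 0 < ε → ε < ε₀ →
        c * ε ^ ((2 * (n : ℝ) - ((n : ℝ) - 2) * q) / 2) ≤
          (∫ x in Metric.ball (0 : EuclideanSpace ℝ (Fin n)) δ,
            ((ε / (ε ^ 2 + ‖x‖ ^ 2)) ^ (((n : ℝ) - 2) / 2)) ^ q) ∧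
        (∫ x in Metric.ball (0 : EuclideanSpace ℝ (Fin n)) δ,
            ((ε / (ε ^ 2 + ‖x‖ ^ 2)) ^ (((n : ℝ) - 2) / 2)) ^ q) ≤
          C * ε ^ ((2 * (n : ℝ) - ((n : ℝ) - 2) * q) / 2) := by
  haveI : NeZero n := ⟨by omega⟩
  set p : ℝ := ((n:ℝ) - 2) / 2 * q with hp_def
  have hn3 : (3:ℝ) ≤ (n:ℝ) := by exact_mod_cast hn
  have hm2 : (0:ℝ) < (n:ℝ) - 2 := by linarith
  have hq' : (n:ℝ) < ((n:ℝ) - 2) * q := by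
    have := (div_lt_iff₀ hm2).1 hq; linarith
  have hp : (n:ℝ) < 2 * p := by rw [hp_def]; linarith
  have hn1 : 1 ≤ n := by omega
  set A : ℝ := (n : ℝ) * (volume (Metric.ball (0:EuclideanSpace ℝ (Fin n)) 1)).toReal with hA_def
  have hA : 0 < A := by
    apply mul_pos (by positivity)
    apply ENNReal.toReal_pos (measure_ball_pos volume _ one_pos).ne'
      (measure_ball_lt_top).ne
  set H : ℝ → ℝ := fun s => s ^ (n-1) * (1 + s^2) ^ (-p) with hH_def
  have hexp : ∀ ε : ℝ, 0 < ε →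
      ε ^ ((2 * (n : ℝ) - ((n : ℝ) - 2) * q) / 2) = ε ^ ((n:ℝ) - p) := by
    intro ε hε; congr 1; rw [hp_def]; ring
  refine ⟨A * ∫ s in Ioo (0:ℝ) δ, H s, A * ∫ s in Ioi (0:ℝ), H s, 1,
    mul_pos hA (K_pos n p δ hδ), mul_pos hA ?_, one_pos, ?_⟩
  · calc (0:ℝ) < ∫ s in Ioo (0:ℝ) δ, H s := K_pos n p δ hδ
      _ ≤ ∫ s in Ioi (0:ℝ), H s := by
        apply setIntegral_mono_set (H_int n p hn1 hp)
        · filter_upwards [ae_restrict_mem measurableSet_Ioi] with s hs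
          have : (0:ℝ) < s := hs
          positivity
        · exact HasSubset.Subset.eventuallyLE Ioo_subset_Ioi_self
  · intro ε hε hε1
    have hI : (∫ x in Metric.ball (0 : EuclideanSpace ℝ (Fin n)) δ,
        ((ε / (ε ^ 2 + ‖x‖ ^ 2)) ^ (((n : ℝ) - 2) / 2)) ^ q)
        = A * (ε ^ ((n:ℝ) - p) * ∫ s in Ioo (0:ℝ) (δ/ε), H s) := by
      rw [← radial n hn p δ ε hε]
      apply setIntegral_congr_fun measurableSet_ball
      intro x _
      show ((ε / (ε ^ 2 + ‖x‖ ^ 2)) ^ (((n:ℝ) - 2) / 2)) ^ q = (ε / (ε ^ 2 + ‖x‖ ^ 2)) ^ p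
      rw [hp_def, Real.rpow_mul (by positivity)]
    have hδε : δ ≤ δ / ε := by
      rw [le_div_iff₀ hε]; nlinarith
    have hmono1 : (∫ s in Ioo (0:ℝ) δ, H s) ≤ ∫ s in Ioo (0:ℝ) (δ/ε), H s := by
      apply setIntegral_mono_set ((H_int n p hn1 hp).mono_set Ioo_subset_Ioi_self)
      · filter_upwards [ae_restrict_mem measurableSet_Ioo] with s hs
        have : (0:ℝ) < s := hs.1
        positivity
      · exact HasSubset.Subset.eventuallyLE (Ioo_subset_Ioo_right hδε)
    have hmono2 : (∫ s in Ioo (0:ℝ) (δ/ε), H s) ≤ ∫ s in Ioi (0:ℝ), H s := by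
      apply setIntegral_mono_set (H_int n p hn1 hp)
      · filter_upwards [ae_restrict_mem measurableSet_Ioi] with s hs
        have : (0:ℝ) < s := hs
        positivity
      · exact HasSubset.Subset.eventuallyLE Ioo_subset_Ioi_self
    have hεp : (0:ℝ) < ε ^ ((n:ℝ) - p) := Real.rpow_pos_of_pos hε _
    rw [hI, hexp ε hε]
    constructor
    · nlinarith [mul_nonneg (mul_nonneg hA.le hεp.le) (sub_nonneg.2 hmono1)]
    · nlinarith [mul_nonneg (mul_nonneg hA.le hεp.le) (sub_nonneg.2 hmono2)]
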